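/- (Asymptotic size of the ASobel test under H00.) Let δ ∈ (0,1), let c₂ > 0 satisfy Φ_{N(0,1/4)}(c₂) = 1 − δ/2, and let c₁ ∈ ℝ be arbitrary. For each n let S_n be a real random variable on a probability space (Ω_n, μ_n) such that the laws of S_n converge in distribution to gaussianReal 0 (1/4), and let A_n ⊆ Ω_n be measurable events with μ_n(A_n) → 1. Then the rejection probability of the adaptive Sobel test, μ_n( ({|S_n| > c₂} ∩ A_n) ∪ ({|S_n| > c₁} ∩ A_nᶜ) ), converges to δ as n → ∞. -/

import Mathlib

open MeasureTheory ProbabilityTheory Set Filter OmegaCompletePartialOrder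
open scoped NNReal ENNReal

lemma tsum_iSup_mono' {g : ℕ → ℕ → ℝ≥0∞} (hg : ∀ i, Monotone fun n => g n i) :
    ∑' i, ⨆ n, g n i = ⨆ n, ∑' i, g n i := by
  calc ∑' i, ⨆ n, g n i = ⨆ I : Finset ℕ, ∑ i ∈ I, ⨆ n, g n i := ENNReal.tsum_eq_iSup_sum
    _ = ⨆ I : Finset ℕ, ⨆ n, ∑ i ∈ I, g n i :=
        iSup_congr fun I => ENNReal.finsetSum_iSup_of_monotone fun i a b hab => hg i hab
    _ = ⨆ n, ⨆ I : Finset ℕ, ∑ i ∈ I, g n i := iSup_comm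
    _ = ⨆ n, ∑' i, g n i := by simp_rw [ENNReal.tsum_eq_iSup_sum]

lemma measure_iSup_apply_le {α : Type*} [MeasurableSpace α] (c : ℕ → Measure α)
    (hc : Monotone c) {s : Set α} (hs : MeasurableSet s) :
    (⨆ n, c n) s ≤ ⨆ n, c n s := by
  have hadd : ∀ f : ℕ → Set α, (∀ i, MeasurableSet (f i)) → Pairwise (Function.onFun Disjoint f) →
      (⨆ n, c n (⋃ i, f i)) = ∑' i, ⨆ n, c n (f i) := by
    intro f hf hdisj
    have h1 : ∀ n, c n (⋃ i, f i) = ∑' i, c n (f i) := fun n => measure_iUnion hdisj hf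
    simp_rw [h1]
    exact (tsum_iSup_mono' fun i a b hab => Measure.le_iff'.mp (hc hab) (f i)).symm
  set T : Measure α := Measure.ofMeasurable (fun s _ => ⨆ n, c n s)
    (by simp) hadd with hT
  have hTapp : ∀ (t : Set α), MeasurableSet t → T t = ⨆ n, c n t := fun t ht =>
    Measure.ofMeasurable_apply t ht
  have hle : ∀ n, c n ≤ T := fun n => Measure.le_iff.mpr fun t ht => by
    rw [hTapp t ht]; exact le_iSup (fun k => c k t) n
  have hsup : (⨆ n, c n) ≤ T := iSup_le hle
  calc (⨆ n, c n) s ≤ T s := Measure.le_iff'.mp hsup s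
    _ = ⨆ n, c n s := hTapp s hs

/-- `{m | r < m s}` is Scott open in the space of measures, for `s` measurable. -/
lemma scott_isOpen_lt_meas {α : Type*} [MeasurableSpace α] {s : Set α}
    (hs : MeasurableSet s) (r : ℝ≥0∞) :
    Scott.IsOpen (Measure α) {m : Measure α | r < m s} := by
  have hmono : Monotone fun m : Measure α => r < m s :=
    fun a b hab h => lt_of_lt_of_le h (Measure.le_iff'.mp hab s)
  rw [Scott.IsOpen]
  refine ωScottContinuous_iff_monotone_map_ωSup.mpr ⟨hmono, fun c => ?_⟩
  rw [eq_iff_iff]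
  constructor
  · intro h
    have h2 : (ωSup c) s ≤ ⨆ n, (c n) s :=
      measure_iSup_apply_le (fun n => c n) c.monotone hs
    obtain ⟨n, hn⟩ := lt_iSup_iff.mp (lt_of_lt_of_le h h2)
    exact le_ωSup (c.map ⟨fun m : Measure α => r < m s, hmono⟩) n hn
  · intro h
    obtain ⟨n, hn⟩ :=
      (ωSup_le (c.map ⟨fun m : Measure α => r < m s, hmono⟩)
        (∃ k, r < (c k) s) (fun k hk => ⟨k, hk⟩)) h
    exact lt_of_lt_of_le hn (Measure.le_iff'.mp (le_ωSup c n) s)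

lemma gaussian_quarter_tail (δ : ℝ) (hδ : δ ∈ Ioo (0:ℝ) 1) (c₂ : ℝ) (hc₂pos : 0 < c₂)
    (hc₂ : gaussianReal 0 (1/4 : ℝ≥0) (Iic c₂) = ENNReal.ofReal (1 - δ / 2)) :
    gaussianReal 0 (1/4 : ℝ≥0) {x : ℝ | c₂ < |x|} = ENNReal.ofReal δ := by
  set ν := gaussianReal 0 (1/4 : ℝ≥0) with hν
  have hprob : IsProbabilityMeasure ν := by infer_instance
  have hv : (1/4 : ℝ≥0) ≠ 0 := by norm_num
  have hEeq : {x : ℝ | c₂ < |x|} = Iio (-c₂) ∪ Ioi c₂ := by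
    ext x
    simp only [mem_setOf_eq, mem_union, mem_Iio, mem_Ioi, lt_abs]
    constructor
    · rintro (h | h)
      · exact Or.inr h
      · exact Or.inl (by linarith)
    · rintro (h | h)
      · exact Or.inr (by linarith)
      · exact Or.inl h
  -- measure of right tail
  have hIoi : ν (Ioi c₂) = ENNReal.ofReal (δ / 2) := by
    have h1 : ν (Ioi c₂) = 1 - ν (Iic c₂) := by
      have := measure_compl (measurableSet_Iic (a := c₂)) (measure_ne_top ν _)
      simpa [compl_Iic] using this
    rw [h1, hc₂]
    rw [show (1 : ENNReal) = ENNReal.ofReal 1 by simp,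
      ← ENNReal.ofReal_sub _ (by linarith [hδ.2] : (0:ℝ) ≤ 1 - δ/2)]
    norm_num
  -- symmetry: ν is symmetric about 0
  have hmap : ν.map (fun x : ℝ => (-1 : ℝ) * x) = ν := by
    rw [hν, gaussianReal_map_const_mul]
    norm_num
  have hIio : ν (Iio (-c₂)) = ν (Ioi c₂) := by
    have hm : Measurable (fun x : ℝ => (-1 : ℝ) * x) := by fun_prop
    have := Measure.map_apply (μ := ν) hm (measurableSet_Iio (a := -c₂))
    rw [hmap] at this
    rw [this]
    congr 1
    ext x
    simp only [mem_preimage, mem_Iio, mem_Ioi]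
    constructor <;> intro h <;> linarith
  have hdisj : Disjoint (Iio (-c₂)) (Ioi c₂) := by
    apply Set.disjoint_left.mpr
    intro x hx hx'
    simp only [mem_Iio] at hx
    simp only [mem_Ioi] at hx'
    linarith
  rw [hEeq, measure_union hdisj measurableSet_Ioi, hIio, hIoi,
    ← ENNReal.ofReal_add (by linarith [hδ.1]) (by linarith [hδ.1])]
  norm_num

/-- asymptotic size of the ASobel test under H00: If `c₂ > 0` is the
`(1-δ/2)`-quantile of `N(0,1/4)`, the laws of `S n` converge weakly to `N(0,1/4)`, and
`μ n (A n) → 1`, then the ASobel rejection probability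
`μ n (({|S n| > c₂} ∩ A n) ∪ ({|S n| > c₁} ∩ (A n)ᶜ))` converges to `δ`. -/
theorem asobel_test_size_H00
    (δ : ℝ) (hδ : δ ∈ Ioo (0:ℝ) 1) (c₂ : ℝ) (hc₂pos : 0 < c₂)
    (hc₂ : gaussianReal 0 (1/4 : ℝ≥0) (Iic c₂) = ENNReal.ofReal (1 - δ / 2))
    (c₁ : ℝ)
    {Ω : ℕ → Type*} [∀ n, MeasurableSpace (Ω n)]
    (μ : ∀ n, Measure (Ω n)) [∀ n, IsProbabilityMeasure (μ n)]
    (S : ∀ n, Ω n → ℝ) (hS : ∀ n, Measurable (S n))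
    (hconv : Tendsto
      (fun n => (⟨Measure.map (S n) (μ n),
        Measure.isProbabilityMeasure_map (hS n).aemeasurable⟩ : ProbabilityMeasure ℝ))
      atTop (nhds (X := ProbabilityMeasure ℝ) ⟨gaussianReal 0 (1/4 : ℝ≥0), inferInstance⟩))
    (A : ∀ n, Set (Ω n)) (hA : ∀ n, MeasurableSet (A n))
    (hA1 : Tendsto (fun n => μ n (A n)) atTop (nhds 1)) :
    Tendsto
      (fun n => μ n (({ω | c₂ < |S n ω|} ∩ A n) ∪ ({ω | c₁ < |S n ω|} ∩ (A n)ᶜ)))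
      atTop (nhds (ENNReal.ofReal δ)) := by
  set ν := gaussianReal 0 (1/4 : ℝ≥0) with hν
  set E : Set ℝ := {x : ℝ | c₂ < |x|} with hE
  have hEm : MeasurableSet E := (isOpen_lt continuous_const continuous_abs).measurableSet
  have hνE : ν E = ENNReal.ofReal δ := gaussian_quarter_tail δ hδ c₂ hc₂pos hc₂
  -- setwise convergence at E
  have hB0 : Tendsto (fun n => (Measure.map (S n) (μ n)) E) atTop (nhds (ν E)) := by
    have hfr : ν (frontier E) = 0 := by
      haveI : NullSingletonClass ν := nullSingletonClass_gaussianReal (by norm_num)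
      have hsub : frontier E ⊆ {c₂} ∪ {-c₂} := by
        refine (frontier_lt_subset_eq continuous_const continuous_abs).trans ?_
        intro x hx
        simp only [mem_setOf_eq] at hx
        rcases (abs_eq (le_of_lt hc₂pos)).mp hx.symm with h | h
        · exact Or.inl h
        · exact Or.inr h
      exact measure_mono_null hsub (measure_union_null (measure_singleton _) (measure_singleton _))
    exact ProbabilityMeasure.tendsto_measure_of_null_frontier_of_tendsto' hconv hfr
  have hB : Tendsto (fun n => μ n {ω | c₂ < |S n ω|}) atTop (nhds (ENNReal.ofReal δ)) := by
    rw [hνE] at hB0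
    have hBeq : ∀ n, (Measure.map (S n) (μ n)) E = μ n {ω | c₂ < |S n ω|} := fun n => by
      rw [Measure.map_apply (hS n) hEm]; rfl
    simpa [hBeq] using hB0
  -- μ n (A n)ᶜ → 0
  have hcompl : Tendsto (fun n => μ n ((A n)ᶜ)) atTop (nhds 0) := by
    have heq : ∀ n, μ n ((A n)ᶜ) = 1 - μ n (A n) := fun n => by
      rw [measure_compl (hA n) (measure_ne_top _ _), measure_univ]
    simp_rw [heq]
    have := ENNReal.Tendsto.sub (tendsto_const_nhds (x := (1 : ℝ≥0∞)) (f := atTop))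
      hA1 (Or.inl ENNReal.one_ne_top)
    simpa using this
  -- squeeze
  have hupper : Tendsto (fun n => μ n {ω | c₂ < |S n ω|} + μ n ((A n)ᶜ)) atTop
      (nhds (ENNReal.ofReal δ)) := by
    have := hB.add hcompl
    simpa using this
  have hlower : Tendsto (fun n => μ n {ω | c₂ < |S n ω|} - μ n ((A n)ᶜ)) atTop
      (nhds (ENNReal.ofReal δ)) := by
    have := ENNReal.Tendsto.sub hB hcompl (Or.inl ENNReal.ofReal_ne_top)
    simpa using this
  refine tendsto_of_tendsto_of_tendsto_of_le_of_le hlower hupper ?_ ?_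
  · intro n
    rw [tsub_le_iff_right]
    calc μ n {ω | c₂ < |S n ω|}
        ≤ μ n ((({ω | c₂ < |S n ω|} ∩ A n) ∪ ({ω | c₁ < |S n ω|} ∩ (A n)ᶜ)) ∪ (A n)ᶜ) := by
          apply measure_mono
          intro ω hω
          by_cases hωA : ω ∈ A n
          · exact Or.inl (Or.inl ⟨hω, hωA⟩)
          · exact Or.inr hωA
      _ ≤ μ n (({ω | c₂ < |S n ω|} ∩ A n) ∪ ({ω | c₁ < |S n ω|} ∩ (A n)ᶜ)) + μ n ((A n)ᶜ) :=
          measure_union_le _ _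
  · intro n
    calc μ n (({ω | c₂ < |S n ω|} ∩ A n) ∪ ({ω | c₁ < |S n ω|} ∩ (A n)ᶜ))
        ≤ μ n ({ω | c₂ < |S n ω|} ∪ (A n)ᶜ) := by
          apply measure_mono
          rintro ω (⟨h1, _⟩ | ⟨_, h2⟩)
          · exact Or.inl h1
          · exact Or.inr h2
      _ ≤ μ n {ω | c₂ < |S n ω|} + μ n ((A n)ᶜ) := measure_union_le _ _
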